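/- The partial transpose of the Choi operator A^(n) of Λ^(n) over the second copy of K (systems n+1 through 2n) equals ⊗_{k=1}^n (I − V)_{k,n+k}, where V is the swap operator; in particular this partial transpose is positive semidefinite. -/

import Mathlib

open ComplexOrder

/-- `ρ_B`: the partial trace of `ρ` over the systems outside `B`, padded with identity
operators on those systems (so `ρ_∅ = Tr(ρ)·I` and `ρ_{1,…,n} = ρ`). -/
noncomputable def subsystemPad {n : ℕ} {d : Fin n → ℕ}
    (ρ : Matrix (∀ i, Fin (d i)) (∀ i, Fin (d i)) ℂ) (B : Finset (Fin n)) :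
    Matrix (∀ i, Fin (d i)) (∀ i, Fin (d i)) ℂ :=
  Matrix.of fun x y =>
    if ∀ i ∉ B, x i = y i then
      ∑ w : ∀ i, Fin (d i),
        if ∀ i ∈ B, w i = x i then ρ w (fun i => if i ∈ B then y i else w i) else 0
    else 0

/-- The generalised reduction map `Λ⁽ⁿ⁾(ρ) = Σ_{B ⊆ {1,…,n}} (−1)^{|B|} ρ_B`. -/
noncomputable def genRed {n : ℕ} {d : Fin n → ℕ}
    (ρ : Matrix (∀ i, Fin (d i)) (∀ i, Fin (d i)) ℂ) :
    Matrix (∀ i, Fin (d i)) (∀ i, Fin (d i)) ℂ :=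
  ∑ B : Finset (Fin n), ((-1 : ℂ) ^ B.card) • subsystemPad ρ B

/-- sign expansion: `∑_B (-1)^{|B|} ∏_i (if i∈B then f i else g i) = ∏_i (g i - f i)`. -/
lemma sign_expand {ι : Type*} [Fintype ι] [DecidableEq ι] (f g : ι → ℂ) :
    ∑ B : Finset ι, (-1 : ℂ) ^ B.card * ∏ i, (if i ∈ B then f i else g i)
      = ∏ i, (g i - f i) := by
  have key : ∀ B : Finset ι,
      (-1 : ℂ) ^ B.card * ∏ i, (if i ∈ B then f i else g i)
        = (∏ i ∈ B, (-f i)) * ∏ i ∈ Finset.univ \ B, g i := by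
    intro B
    rw [Finset.prod_ite]
    have hf : Finset.univ.filter (· ∈ B) = B := by ext i; simp
    have hg : Finset.univ.filter (fun i => ¬ i ∈ B) = Finset.univ \ B := by ext i; simp
    rw [hf, hg]
    have : ∏ i ∈ B, (-f i) = (-1 : ℂ) ^ B.card * ∏ i ∈ B, f i := by
      rw [Finset.prod_congr rfl fun i _ => neg_eq_neg_one_mul (f i),
        Finset.prod_mul_distrib, Finset.prod_const]
    rw [this, mul_assoc]
  simp_rw [key]
  have := (Finset.prod_add (fun i => -f i) g Finset.univ).symm
  rw [Finset.powerset_univ] at this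
  rw [this]
  exact Finset.prod_congr rfl fun i _ => by ring

lemma subsystemPad_delta {n : ℕ} {d : Fin n → ℕ} (p1 q1 x y : ∀ i, Fin (d i))
    (B : Finset (Fin n)) :
    subsystemPad (Matrix.of fun a b : ∀ i, Fin (d i) =>
        if p1 = a ∧ q1 = b then (1 : ℂ) else 0) B x y
      = ∏ i, (if i ∈ B then (if p1 i = x i ∧ q1 i = y i then (1 : ℂ) else 0)
          else (if x i = y i ∧ q1 i = p1 i then (1 : ℂ) else 0)) := by
  have hsum : (∑ w : ∀ i, Fin (d i),
      if ∀ i ∈ B, w i = x i then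
        (if p1 = w ∧ q1 = (fun i => if i ∈ B then y i else w i) then (1 : ℂ) else 0) else 0)
      = if (∀ i ∈ B, p1 i = x i) ∧ (∀ i, q1 i = if i ∈ B then y i else p1 i)
          then (1 : ℂ) else 0 := by
    rw [Finset.sum_eq_single p1]
    · by_cases h1 : ∀ i ∈ B, p1 i = x i <;>
        by_cases h2 : ∀ i, q1 i = if i ∈ B then y i else p1 i <;>
        simp [h1, h2, funext_iff]
    · intro w _ hw
      split_ifs with h1 h2
      · exact absurd h2.1.symm hw
      · rfl
      · rfl
    · intro h; exact absurd (Finset.mem_univ p1) h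
  unfold subsystemPad
  simp only [Matrix.of_apply]
  rw [hsum]
  have hmerge : (if ∀ i ∉ B, x i = y i then
      (if (∀ i ∈ B, p1 i = x i) ∧ (∀ i, q1 i = if i ∈ B then y i else p1 i)
        then (1 : ℂ) else 0) else 0)
      = if (∀ i ∉ B, x i = y i) ∧ (∀ i ∈ B, p1 i = x i) ∧
          (∀ i, q1 i = if i ∈ B then y i else p1 i) then (1 : ℂ) else 0 := by
    split_ifs <;> tauto
  rw [hmerge]
  have hsplit : ∀ i : Fin n, (if i ∈ B then (if p1 i = x i ∧ q1 i = y i then (1 : ℂ) else 0)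
      else (if x i = y i ∧ q1 i = p1 i then (1 : ℂ) else 0))
      = if ((i ∈ B → (p1 i = x i ∧ q1 i = y i)) ∧ (i ∉ B → (x i = y i ∧ q1 i = p1 i)))
          then (1 : ℂ) else 0 := by
    intro i; split_ifs <;> tauto
  simp_rw [hsplit]
  rw [Finset.prod_boole]
  congr 1
  simp only [Finset.mem_univ, forall_true_left, eq_iff_iff]
  constructor
  · rintro ⟨h1, h2, h3⟩ i
    refine ⟨fun hi => ⟨h2 i hi, by simpa [hi] using (h3 i)⟩,
        fun hi => ⟨h1 i hi, by simpa [hi] using (h3 i)⟩⟩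
  · intro h
    refine ⟨fun i hi => ((h i).2 hi).1, fun i hi => ((h i).1 hi).1, fun i => ?_⟩
    by_cases hi : i ∈ B
    · simp [hi, ((h i).1 hi).2]
    · simp [hi, ((h i).2 hi).2]

lemma genRed_delta {n : ℕ} {d : Fin n → ℕ} (p1 q1 x y : ∀ i, Fin (d i)) :
    genRed (Matrix.of fun a b : ∀ i, Fin (d i) =>
        if p1 = a ∧ q1 = b then (1 : ℂ) else 0) x y
      = ∏ i, ((if x i = y i ∧ q1 i = p1 i then (1 : ℂ) else 0)
          - (if p1 i = x i ∧ q1 i = y i then (1 : ℂ) else 0)) := by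
  unfold genRed
  rw [Matrix.sum_apply]
  simp_rw [Matrix.smul_apply, smul_eq_mul, subsystemPad_delta]
  exact sign_expand _ _

lemma pi_sum_prod {ι : Type*} [Fintype ι] [DecidableEq ι] {β : ι → Type*}
    [∀ i, Fintype (β i)] (h : ∀ i, β i → ℂ) :
    ∑ r : ∀ i, β i, ∏ i, h i (r i) = ∏ i, ∑ b, h i b := by
  rw [Finset.prod_univ_sum, Fintype.piFinset_univ]

lemma site_sum {α : Type*} [Fintype α] [DecidableEq α] (x y u v : α) :
    ∑ a : α, ∑ b : α,
      (((if x = a ∧ y = b then (1 : ℂ) else 0) - (if x = b ∧ y = a then 1 else 0)) *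
       ((if a = u ∧ b = v then 1 else 0) - (if a = v ∧ b = u then 1 else 0)))
    = 2 * ((if x = u ∧ y = v then (1 : ℂ) else 0) - (if x = v ∧ y = u then 1 else 0)) := by
  simp only [sub_mul, mul_sub, Finset.sum_sub_distrib, ite_and, ite_mul, mul_ite,
    one_mul, zero_mul, mul_one, mul_zero, Finset.sum_ite_eq, Finset.sum_ite_eq',
    Finset.mem_univ, if_true]
  simp only [Finset.sum_ite_irrel, Finset.sum_ite_eq, Finset.sum_ite_eq',
    Finset.mem_univ, if_true, Finset.sum_const_zero]
  split_ifs <;> ring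


/-- The partial transpose of the Choi operator `A⁽ⁿ⁾ = (I ⊗ Λ⁽ⁿ⁾)(P₊)` over the second
copy of `K` (systems `n+1, …, 2n`) equals `⊗_{k=1}^n (I − V)_{k,n+k}`, where `V` is the
swap operator; in particular this partial transpose is positive semidefinite. -/
theorem choi_genRed_partial_transpose (n : ℕ) (d : Fin n → ℕ) :
    let Pplus : Matrix ((∀ i, Fin (d i)) × (∀ i, Fin (d i)))
        ((∀ i, Fin (d i)) × (∀ i, Fin (d i))) ℂ :=
      Matrix.of fun p q => if p.1 = p.2 ∧ q.1 = q.2 then 1 else 0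
    let A : Matrix ((∀ i, Fin (d i)) × (∀ i, Fin (d i)))
        ((∀ i, Fin (d i)) × (∀ i, Fin (d i))) ℂ :=
      Matrix.of fun p q =>
        genRed (Matrix.of fun a b : ∀ i, Fin (d i) => Pplus (p.1, a) (q.1, b)) p.2 q.2
    -- partial transpose over the second copy of `K`
    let APT : Matrix ((∀ i, Fin (d i)) × (∀ i, Fin (d i)))
        ((∀ i, Fin (d i)) × (∀ i, Fin (d i))) ℂ :=
      Matrix.of fun p q => A (p.1, q.2) (q.1, p.2)
    (APT = Matrix.of fun p q =>
        ∏ k : Fin n,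
          ((if p.1 k = q.1 k ∧ p.2 k = q.2 k then (1 : ℂ) else 0) -
           (if p.1 k = q.2 k ∧ p.2 k = q.1 k then (1 : ℂ) else 0))) ∧
    APT.PosSemidef := by
  intro Pplus A APT
  set N : Matrix ((∀ i, Fin (d i)) × (∀ i, Fin (d i)))
      ((∀ i, Fin (d i)) × (∀ i, Fin (d i))) ℂ := Matrix.of fun p q =>
      ∏ k : Fin n,
        ((if p.1 k = q.1 k ∧ p.2 k = q.2 k then (1 : ℂ) else 0) -
         (if p.1 k = q.2 k ∧ p.2 k = q.1 k then (1 : ℂ) else 0)) with hN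
  have hEq : APT = N := by
    ext p q
    show genRed (Matrix.of fun a b : ∀ i, Fin (d i) =>
        if p.1 = a ∧ q.1 = b then (1 : ℂ) else 0) q.2 p.2 = _
    rw [genRed_delta, hN]
    refine Finset.prod_congr rfl fun k _ => ?_
    congr 1
    · exact if_congr ⟨fun ⟨h1, h2⟩ => ⟨h2.symm, h1.symm⟩,
        fun ⟨h1, h2⟩ => ⟨h2.symm, h1.symm⟩⟩ rfl rfl
    · exact if_congr ⟨fun ⟨h1, h2⟩ => ⟨h1, h2.symm⟩,
        fun ⟨h1, h2⟩ => ⟨h1, h2.symm⟩⟩ rfl rfl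
  have hherm : N.IsHermitian := by
    ext p q
    simp only [hN, Matrix.conjTranspose_apply, Matrix.of_apply, star_prod, star_sub,
      apply_ite (star : ℂ → ℂ), star_one, star_zero]
    refine Finset.prod_congr rfl fun k _ => ?_
    congr 1
    · exact if_congr ⟨fun ⟨h1, h2⟩ => ⟨h1.symm, h2.symm⟩,
        fun ⟨h1, h2⟩ => ⟨h1.symm, h2.symm⟩⟩ rfl rfl
    · exact if_congr ⟨fun ⟨h1, h2⟩ => ⟨h2.symm, h1.symm⟩,
        fun ⟨h1, h2⟩ => ⟨h2.symm, h1.symm⟩⟩ rfl rfl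
  have hsq : N * N = ((2 : ℂ) ^ n) • N := by
    ext p q
    rw [Matrix.mul_apply]
    simp only [hN, Matrix.of_apply, Matrix.smul_apply, smul_eq_mul]
    have h1 : ∀ r : (∀ i, Fin (d i)) × (∀ i, Fin (d i)),
        (∏ k : Fin n, ((if p.1 k = r.1 k ∧ p.2 k = r.2 k then (1 : ℂ) else 0) -
            (if p.1 k = r.2 k ∧ p.2 k = r.1 k then (1 : ℂ) else 0))) *
          ∏ k : Fin n, ((if r.1 k = q.1 k ∧ r.2 k = q.2 k then (1 : ℂ) else 0) -
            (if r.1 k = q.2 k ∧ r.2 k = q.1 k then (1 : ℂ) else 0))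
        = ∏ k : Fin n,
            (((if p.1 k = r.1 k ∧ p.2 k = r.2 k then (1 : ℂ) else 0) -
              (if p.1 k = r.2 k ∧ p.2 k = r.1 k then (1 : ℂ) else 0)) *
             ((if r.1 k = q.1 k ∧ r.2 k = q.2 k then (1 : ℂ) else 0) -
              (if r.1 k = q.2 k ∧ r.2 k = q.1 k then (1 : ℂ) else 0))) := fun r =>
      (Finset.prod_mul_distrib).symm
    simp_rw [h1]
    rw [Fintype.sum_prod_type]
    have h2 : ∀ r1 : ∀ i, Fin (d i), ∑ r2 : ∀ i, Fin (d i), ∏ k : Fin n,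
        (((if p.1 k = r1 k ∧ p.2 k = r2 k then (1 : ℂ) else 0) -
          (if p.1 k = r2 k ∧ p.2 k = r1 k then (1 : ℂ) else 0)) *
         ((if r1 k = q.1 k ∧ r2 k = q.2 k then (1 : ℂ) else 0) -
          (if r1 k = q.2 k ∧ r2 k = q.1 k then (1 : ℂ) else 0)))
        = ∏ k : Fin n, ∑ b : Fin (d k),
            (((if p.1 k = r1 k ∧ p.2 k = b then (1 : ℂ) else 0) -
              (if p.1 k = b ∧ p.2 k = r1 k then (1 : ℂ) else 0)) *
             ((if r1 k = q.1 k ∧ b = q.2 k then (1 : ℂ) else 0) -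
              (if r1 k = q.2 k ∧ b = q.1 k then (1 : ℂ) else 0))) := fun r1 =>
      pi_sum_prod (fun k b =>
        (((if p.1 k = r1 k ∧ p.2 k = b then (1 : ℂ) else 0) -
          (if p.1 k = b ∧ p.2 k = r1 k then (1 : ℂ) else 0)) *
         ((if r1 k = q.1 k ∧ b = q.2 k then (1 : ℂ) else 0) -
          (if r1 k = q.2 k ∧ b = q.1 k then (1 : ℂ) else 0))))
    simp_rw [h2]
    rw [pi_sum_prod (fun k a => ∑ b : Fin (d k),
        (((if p.1 k = a ∧ p.2 k = b then (1 : ℂ) else 0) -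
          (if p.1 k = b ∧ p.2 k = a then (1 : ℂ) else 0)) *
         ((if a = q.1 k ∧ b = q.2 k then (1 : ℂ) else 0) -
          (if a = q.2 k ∧ b = q.1 k then (1 : ℂ) else 0))))]
    have h3 : ∀ k : Fin n, ∑ a : Fin (d k), ∑ b : Fin (d k),
        (((if p.1 k = a ∧ p.2 k = b then (1 : ℂ) else 0) -
          (if p.1 k = b ∧ p.2 k = a then (1 : ℂ) else 0)) *
         ((if a = q.1 k ∧ b = q.2 k then (1 : ℂ) else 0) -
          (if a = q.2 k ∧ b = q.1 k then (1 : ℂ) else 0)))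
        = 2 * ((if p.1 k = q.1 k ∧ p.2 k = q.2 k then (1 : ℂ) else 0) -
            (if p.1 k = q.2 k ∧ p.2 k = q.1 k then (1 : ℂ) else 0)) := fun k =>
      site_sum _ _ _ _
    simp_rw [h3]
    rw [Finset.prod_mul_distrib, Finset.prod_const, Finset.card_univ, Fintype.card_fin]
  have hne : ((2 : ℂ) ^ n) ≠ 0 := pow_ne_zero _ two_ne_zero
  have hrepr : N = ((2 : ℂ) ^ n)⁻¹ • (N.conjTranspose * N) := by
    rw [show N.conjTranspose = N from hherm, hsq, smul_smul, inv_mul_cancel₀ hne, one_smul]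
  refine ⟨hEq, ?_⟩
  rw [hEq, Matrix.posSemidef_iff_dotProduct_mulVec]
  refine ⟨hherm, fun v => ?_⟩
  rw [hrepr, Matrix.smul_mulVec, dotProduct_smul, smul_eq_mul]
  have hc : (0 : ℂ) ≤ ((2 : ℂ) ^ n)⁻¹ := by
    rw [show ((2 : ℂ) ^ n)⁻¹ = ((((2 : ℝ) ^ n)⁻¹ : ℝ) : ℂ) by push_cast; ring]
    exact_mod_cast Complex.zero_le_real.2 (by positivity)
  exact mul_nonneg hc ((Matrix.posSemidef_iff_dotProduct_mulVec.1 (Matrix.posSemidef_conjTranspose_mul_self N)).2 v)
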